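/- Let m ≥ 1 and l > k > 0 be natural numbers with 3k + 1 ≥ 2l, and let A = ℝ^l_m be the truncated polynomial algebra with maximal ideal 𝔪_A. Then for any two ℝ-algebra automorphisms σ, σ' of A with σ(a) − σ'(a) ∈ 𝔪_A^{k+1} for all a ∈ A, there exists a unique ℝ-derivation D : A → A taking values in 𝔪_A^{k+1} such that σ'(a) = σ(a) + σ(D(a)) for all a ∈ A. -/

import Mathlib

set_option synthInstance.maxHeartbeats 400000
set_option maxHeartbeats 1000000

noncomputable section

/-- The ideal of `ℝ[ξ₁,…,ξ_m]` generated by the variables. -/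
def varIdeal (m : ℕ) : Ideal (MvPolynomial (Fin m) ℝ) :=
  Ideal.span (Set.range MvPolynomial.X)

/-- The truncated polynomial algebra `ℝ^l_m = ℝ[ξ₁,…,ξ_m]/𝔪^{l+1}`. -/
abbrev TruncPolyAlg (m l : ℕ) : Type :=
  MvPolynomial (Fin m) ℝ ⧸ (varIdeal m) ^ (l + 1)

/-- The maximal ideal of `ℝ^l_m`, the image of the ideal of variables. -/
def truncMaxIdeal (m l : ℕ) : Ideal (TruncPolyAlg m l) :=
  (varIdeal m).map (Ideal.Quotient.mk ((varIdeal m) ^ (l + 1)))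

lemma varIdeal_eq_span_image (m : ℕ) :
    varIdeal m = Ideal.span (MvPolynomial.X '' (Set.univ : Set (Fin m))) := by
  rw [Set.image_univ]; rfl

/-- An element of the truncated algebra is in the maximal ideal iff it is nilpotent. -/
lemma mem_truncMaxIdeal_iff_isNilpotent (m l : ℕ) (x : TruncPolyAlg m l) :
    x ∈ truncMaxIdeal m l ↔ IsNilpotent x := by
  constructor
  · intro hx
    -- generators are nilpotent
    have hgen : ∀ y ∈ (Ideal.Quotient.mk ((varIdeal m) ^ (l + 1))) '' (Set.range MvPolynomial.X),
        y ∈ nilradical (TruncPolyAlg m l) := by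
      rintro y ⟨p, ⟨i, rfl⟩, rfl⟩
      rw [mem_nilradical]
      exact ⟨l + 1, by
        rw [← map_pow, Ideal.Quotient.eq_zero_iff_mem]
        exact Ideal.pow_mem_pow (show MvPolynomial.X i ∈ varIdeal m from Ideal.subset_span ⟨i, rfl⟩) _⟩
    have : truncMaxIdeal m l ≤ nilradical (TruncPolyAlg m l) := by
      unfold truncMaxIdeal varIdeal
      refine Ideal.map_le_iff_le_comap.mpr (Ideal.span_le.mpr ?_)
      intro p hp
      exact hgen _ ⟨p, hp, rfl⟩
    exact this hx
  · intro hx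
    obtain ⟨p, rfl⟩ := Ideal.Quotient.mk_surjective x
    -- the evaluation-at-zero map
    have hker : (varIdeal m) ^ (l + 1) ≤ RingHom.ker (MvPolynomial.aeval (0 : Fin m → ℝ)).toRingHom := by
      refine le_trans (Ideal.pow_le_self (Nat.succ_ne_zero l)) ?_
      refine Ideal.span_le.mpr ?_
      rintro q ⟨i, rfl⟩
      simp [RingHom.mem_ker]
    set φ := Ideal.Quotient.lift _ _ hker with hφ
    have hφx : φ (Ideal.Quotient.mk ((varIdeal m) ^ (l + 1)) p) = MvPolynomial.aeval (0 : Fin m → ℝ) p :=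
      rfl
    have hnil : IsNilpotent (φ (Ideal.Quotient.mk ((varIdeal m) ^ (l + 1)) p)) := hx.map φ
    rw [hφx, MvPolynomial.aeval_zero] at hnil
    have hc : MvPolynomial.constantCoeff p = 0 := by
      have := hnil.eq_zero
      simpa using this
    have hp : p ∈ varIdeal m := by
      rw [varIdeal_eq_span_image]
      rw [MvPolynomial.mem_ideal_span_X_image]
      intro μ hμ
      by_cases hμ0 : μ = 0
      · exfalso
        rw [MvPolynomial.mem_support_iff, hμ0] at hμ
        exact hμ hc
      · obtain ⟨i, hi⟩ := Finsupp.ne_iff.mp hμ0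
        exact ⟨i, Set.mem_univ i, by simpa using hi⟩
    exact Ideal.mem_map_of_mem _ hp

/-- Algebra automorphisms preserve the maximal ideal. -/
lemma algEquiv_mem_truncMaxIdeal (m l : ℕ) (e : TruncPolyAlg m l ≃ₐ[ℝ] TruncPolyAlg m l)
    (x : TruncPolyAlg m l) (hx : x ∈ truncMaxIdeal m l) : e x ∈ truncMaxIdeal m l := by
  rw [mem_truncMaxIdeal_iff_isNilpotent] at hx ⊢
  exact hx.map e

lemma algEquiv_map_truncMaxIdeal (m l : ℕ) (e : TruncPolyAlg m l ≃ₐ[ℝ] TruncPolyAlg m l) :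
    Ideal.map (e : TruncPolyAlg m l →+* TruncPolyAlg m l) (truncMaxIdeal m l)
      = truncMaxIdeal m l := by
  apply le_antisymm
  · rw [Ideal.map_le_iff_le_comap]
    intro x hx
    exact algEquiv_mem_truncMaxIdeal m l e x hx
  · intro x hx
    have : e (e.symm x) = x := e.apply_symm_apply x
    rw [← this]
    exact Ideal.mem_map_of_mem _ (algEquiv_mem_truncMaxIdeal m l e.symm x hx)

lemma algEquiv_mem_pow_iff (m l n : ℕ) (e : TruncPolyAlg m l ≃ₐ[ℝ] TruncPolyAlg m l)
    (x : TruncPolyAlg m l) : e x ∈ truncMaxIdeal m l ^ n ↔ x ∈ truncMaxIdeal m l ^ n := by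
  have key : ∀ (f : TruncPolyAlg m l ≃ₐ[ℝ] TruncPolyAlg m l) (y : TruncPolyAlg m l),
      y ∈ truncMaxIdeal m l ^ n → f y ∈ truncMaxIdeal m l ^ n := by
    intro f y hy
    have : f y ∈ Ideal.map (f : TruncPolyAlg m l →+* TruncPolyAlg m l) (truncMaxIdeal m l ^ n) :=
      Ideal.mem_map_of_mem _ hy
    rwa [Ideal.map_pow, algEquiv_map_truncMaxIdeal] at this
  constructor
  · intro hx
    have := key e.symm _ hx
    simpa using this
  · exact key e x

lemma truncMaxIdeal_pow_top (m l : ℕ) : truncMaxIdeal m l ^ (l + 1) = ⊥ := by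
  rw [truncMaxIdeal, ← Ideal.map_pow, Ideal.map_quotient_self]

theorem affine_structure_on_jet_groups (m l k : ℕ)
    (hm : 1 ≤ m) (hk : 0 < k) (hkl : k < l) (h : 3 * k + 1 ≥ 2 * l)
    (σ σ' : TruncPolyAlg m l ≃ₐ[ℝ] TruncPolyAlg m l)
    (hσ : ∀ a : TruncPolyAlg m l, σ a - σ' a ∈ truncMaxIdeal m l ^ (k + 1)) :
    ∃! D : Derivation ℝ (TruncPolyAlg m l) (TruncPolyAlg m l),
      (∀ a : TruncPolyAlg m l, D a ∈ truncMaxIdeal m l ^ (k + 1)) ∧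
        ∀ a : TruncPolyAlg m l, σ' a = σ a + σ (D a) := by
  set A := TruncPolyAlg m l
  set τ : A ≃ₐ[ℝ] A := σ'.trans σ.symm with hτ
  have hτa : ∀ a : A, τ a = σ.symm (σ' a) := fun a => rfl
  -- the underlying function of the derivation
  have hDmem : ∀ a : A, τ a - a ∈ truncMaxIdeal m l ^ (k + 1) := by
    intro a
    have h1 : σ (τ a - a) ∈ truncMaxIdeal m l ^ (k + 1) := by
      rw [map_sub, hτa, σ.apply_symm_apply]
      have := hσ a
      have h2 := (truncMaxIdeal m l ^ (k + 1)).neg_mem this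
      simpa using h2
    exact (algEquiv_mem_pow_iff m l (k + 1) σ _).mp h1
  have hsq : ∀ x y : A, x ∈ truncMaxIdeal m l ^ (k + 1) → y ∈ truncMaxIdeal m l ^ (k + 1) →
      x * y = 0 := by
    intro x y hx hy
    have hxy : x * y ∈ truncMaxIdeal m l ^ (k + 1 + (k + 1)) := by
      rw [pow_add (truncMaxIdeal m l) (k + 1) (k + 1)]; exact Ideal.mul_mem_mul hx hy
    have hle : truncMaxIdeal m l ^ (k + 1 + (k + 1)) ≤ truncMaxIdeal m l ^ (l + 1) :=
      Ideal.pow_le_pow_right (by omega)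
    have := hle hxy
    rwa [truncMaxIdeal_pow_top, Ideal.mem_bot] at this
  set Dlin : A →ₗ[ℝ] A := τ.toLinearMap - LinearMap.id with hDlin
  have hDlin_apply : ∀ a : A, Dlin a = τ a - a := fun a => rfl
  set D : Derivation ℝ A A :=
    { toLinearMap := Dlin
      map_one_eq_zero' := by
        rw [hDlin_apply, map_one, sub_self]
      leibniz' := by
        intro a b
        simp only [hDlin_apply, smul_eq_mul]
        have hmul : τ (a * b) = τ a * τ b := map_mul τ a b
        have hzero : (τ a - a) * (τ b - b) = 0 := hsq _ _ (hDmem a) (hDmem b)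
        have expand : τ a * τ b = a * b + a * (τ b - b) + b * (τ a - a) +
            (τ a - a) * (τ b - b) := by ring
        rw [hmul, expand, hzero]
        ring } with hD
  have hDapply : ∀ a : A, D a = τ a - a := fun a => rfl
  refine ⟨D, ⟨?_, ?_⟩, ?_⟩
  · intro a
    rw [hDapply]
    exact hDmem a
  · intro a
    rw [hDapply, map_sub, hτa, σ.apply_symm_apply]
    ring
  · intro D' ⟨_, hD'2⟩
    apply Derivation.ext
    intro a
    have h1 : σ (D' a) = σ' a - σ a := by rw [hD'2 a]; ring
    have h2 : σ (D a) = σ' a - σ a := by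
      rw [hDapply, map_sub, hτa, σ.apply_symm_apply]
    exact σ.injective (by rw [h1, h2])
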